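/- Let δ, ρ ∈ (0,1), and fix a non-almost-constant unit vector v ∈ N(δ,ρ). Then for every α > 0 and every γ ∈ (0, δρ/12), one has CLCD_{α,γ}(v) ≥ (1/7)√(δn). -/

import Mathlib

open Real

noncomputable section

/-- A vector `v` is almost-constant (with parameters `δ, ρ`) if some `λ ∈ ℝ` satisfies
`|v i − λ| ≤ ρ/√n` for at least `(1−δ)n` coordinates `i`. -/
def almostConst {n : ℕ} (δ ρ : ℝ) (v : Fin n → ℝ) : Prop :=
  ∃ lam : ℝ, (1 - δ) * n ≤ (Nat.card {i : Fin n // |v i - lam| ≤ ρ / Real.sqrt n} : ℝ)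

/-- Euclidean norm of a finitely indexed real vector. -/
def pnorm {ι : Type*} [Fintype ι] (x : ι → ℝ) : ℝ := Real.sqrt (∑ i, x i ^ 2)

/-- Index type for the coordinates of `D(v)`: pairs `(i, j)` with `i < j`. -/
abbrev PairIdx (n : ℕ) := {p : Fin n × Fin n // p.1 < p.2}

/-- `D(v)`: the vector in `ℝ^{n(n-1)/2}` whose `(i,j)`-coordinate is `v i - v j`
for `i < j`. -/
def Dvec {n : ℕ} (v : Fin n → ℝ) : PairIdx n → ℝ := fun p => v p.1.1 - v p.1.2

/-- Euclidean distance from a vector to the integer lattice. -/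
def latDist {ι : Type*} [Fintype ι] (x : ι → ℝ) : ℝ :=
  ⨅ m : ι → ℤ, pnorm (fun i => x i - (m i : ℝ))

/-- The combinatorial least common denominator
`CLCD_{α,γ}(v) = inf {θ > 0 : dist(θ D(v), ℤ^{n(n-1)/2}) < min(γ ‖θ D(v)‖₂, α)}`,
as an extended nonnegative real (`∞` if no such `θ` exists). -/
def CLCD (n : ℕ) (α γ : ℝ) (v : Fin n → ℝ) : ENNReal :=
  sInf {θ : ENNReal | ∃ t : ℝ, 0 < t ∧ θ = ENNReal.ofReal t ∧
    latDist (fun p => t * Dvec v p) < min (γ * pnorm (fun p => t * Dvec v p)) α}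

/- ---------- auxiliary lemmas ---------- -/

lemma pnorm_nonneg' {ι : Type*} [Fintype ι] (x : ι → ℝ) : 0 ≤ pnorm x := Real.sqrt_nonneg _

lemma sq_pnorm {ι : Type*} [Fintype ι] (x : ι → ℝ) : pnorm x ^ 2 = ∑ i, x i ^ 2 :=
  Real.sq_sqrt (Finset.sum_nonneg fun i _ => sq_nonneg _)

lemma pnorm_eq {ι : Type*} [Fintype ι] (y : ι → ℝ) :
    pnorm y = ‖((WithLp.equiv 2 (ι → ℝ)).symm y : EuclideanSpace ℝ ι)‖ := by
  rw [EuclideanSpace.norm_eq]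
  simp [pnorm, Real.norm_eq_abs, sq_abs]

lemma pnorm_tri {ι : Type*} [Fintype ι] (x y : ι → ℝ) :
    pnorm y ≤ pnorm (fun i => x i - y i) + pnorm x := by
  rw [pnorm_eq, pnorm_eq, pnorm_eq]
  have h : ((WithLp.equiv 2 (ι → ℝ)).symm y : EuclideanSpace ℝ ι)
      = (WithLp.equiv 2 (ι → ℝ)).symm x - (WithLp.equiv 2 (ι → ℝ)).symm (fun i => x i - y i) := by
    ext i; simp
  rw [h]
  have := norm_sub_le ((WithLp.equiv 2 (ι → ℝ)).symm x : EuclideanSpace ℝ ι)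
    ((WithLp.equiv 2 (ι → ℝ)).symm (fun i => x i - y i))
  linarith

/-- The ordered big-gap pairs are exactly twice the unordered ones. -/
lemma card_gap_pairs {n : ℕ} (v : Fin n → ℝ) (c : ℝ) (hc : 0 < c) :
    ((Finset.univ.filter (fun q : Fin n × Fin n => c < |v q.1 - v q.2|)).card)
    = 2 * (Finset.univ.filter (fun p : PairIdx n => c < |Dvec v p|)).card := by
  classical
  set A := Finset.univ.filter (fun q : Fin n × Fin n => c < |v q.1 - v q.2|) with hA
  set B := Finset.univ.filter (fun p : PairIdx n => c < |Dvec v p|) with hB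
  have h1 : (A.filter (fun q => q.1 < q.2)).card = B.card := by
    refine Finset.card_bij' (fun q hq => (⟨q, (Finset.mem_filter.1 hq).2⟩ : PairIdx n))
      (fun p _ => p.1) ?_ ?_ ?_ ?_
    · intro q hq
      have hq' := Finset.mem_filter.1 (Finset.mem_filter.1 hq).1
      simp only [hB, Finset.mem_filter, Finset.mem_univ, true_and, Dvec]
      exact Finset.mem_filter.2 ⟨Finset.mem_univ _, hq'.2⟩
    · intro p hp
      have hp' := Finset.mem_filter.1 hp
      simp only [hA, Finset.mem_filter, Finset.mem_univ, true_and]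
      exact ⟨hp'.2, p.2⟩
    · intro q hq; rfl
    · intro p hp; rfl
  have h2 : (A.filter (fun q => ¬ q.1 < q.2)).card = B.card := by
    have key : ∀ q ∈ A.filter (fun q => ¬ q.1 < q.2), q.2 < q.1 := by
      intro q hq
      have h := Finset.mem_filter.1 hq
      have hne : q.1 ≠ q.2 := by
        intro he
        have := (Finset.mem_filter.1 h.1).2
        rw [he, sub_self, abs_zero] at this
        linarith
      rcases lt_trichotomy q.1 q.2 with h' | h' | h'
      · exact absurd h' h.2
      · exact absurd h' hne
      · exact h'
    refine Finset.card_bij' (fun q hq => (⟨(q.2, q.1), key q hq⟩ : PairIdx n))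
      (fun p _ => (p.1.2, p.1.1)) ?_ ?_ ?_ ?_
    · intro q hq
      have hq' := Finset.mem_filter.1 (Finset.mem_filter.1 hq).1
      simp only [hB, Finset.mem_filter, Finset.mem_univ, true_and, Dvec]
      exact Finset.mem_filter.2 ⟨Finset.mem_univ _, by rw [abs_sub_comm]; exact hq'.2⟩
    · intro p hp
      have hp' := Finset.mem_filter.1 hp
      refine Finset.mem_filter.2 ⟨Finset.mem_filter.2 ⟨Finset.mem_univ _, ?_⟩,
        not_lt.2 (le_of_lt p.2)⟩
      rw [abs_sub_comm]
      exact hp'.2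
    · intro q hq; rfl
    · intro p hp; rfl
  have := Finset.card_filter_add_card_filter_not (s := A) (p := fun q => q.1 < q.2)
  omega

lemma card_gap_rows {n : ℕ} (v : Fin n → ℝ) (c : ℝ) :
    ((Finset.univ.filter (fun q : Fin n × Fin n => c < |v q.1 - v q.2|)).card)
    = ∑ i : Fin n, (Finset.univ.filter (fun j : Fin n => c < |v i - v j|)).card := by
  rw [Finset.card_filter]
  rw [Fintype.sum_prod_type]
  congr 1
  ext i
  rw [Finset.card_filter]

lemma row_lower {n : ℕ} (δ ρ : ℝ) (v : Fin n → ℝ)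
    (hna : ∀ lam : ℝ, (Nat.card {i : Fin n // |v i - lam| ≤ ρ / Real.sqrt n} : ℝ) < (1 - δ) * n)
    (i : Fin n) :
    δ * n < ((Finset.univ.filter (fun j : Fin n => ρ / Real.sqrt n < |v i - v j|)).card : ℝ) := by
  classical
  have hcard : Nat.card {j : Fin n // |v j - v i| ≤ ρ / Real.sqrt n}
      = (Finset.univ.filter (fun j : Fin n => |v j - v i| ≤ ρ / Real.sqrt n)).card := by
    rw [Nat.card_eq_fintype_card, Fintype.card_subtype]
  have hfe : (Finset.univ.filter (fun j : Fin n => ρ / Real.sqrt n < |v i - v j|))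
      = (Finset.univ.filter (fun j : Fin n => ¬ (|v j - v i| ≤ ρ / Real.sqrt n))) := by
    apply Finset.filter_congr
    intro j _
    rw [abs_sub_comm, not_le]
  have hsum := Finset.card_filter_add_card_filter_not
    (s := (Finset.univ : Finset (Fin n))) (p := fun j => |v j - v i| ≤ ρ / Real.sqrt n)
  have h1 := hna (v i)
  rw [hcard] at h1
  rw [hfe]
  have hc : (Finset.univ : Finset (Fin n)).card = n := Finset.card_univ.trans (Fintype.card_fin n)
  have hcast : ((Finset.univ.filter (fun j : Fin n => |v j - v i| ≤ ρ / Real.sqrt n)).card : ℝ)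
      + ((Finset.univ.filter (fun j : Fin n => ¬ (|v j - v i| ≤ ρ / Real.sqrt n))).card : ℝ)
      = n := by
    rw [← Nat.cast_add, hsum, hc]
  linarith

lemma sumDsq_le {n : ℕ} (v : Fin n → ℝ) (hv2 : ∑ i, v i ^ 2 = 1) :
    ∑ p : PairIdx n, (Dvec v p) ^ 2 ≤ 4 * n := by
  classical
  have h1 : ∑ p : PairIdx n, (Dvec v p) ^ 2
      = ∑ q ∈ Finset.univ.filter (fun q : Fin n × Fin n => q.1 < q.2), (v q.1 - v q.2) ^ 2 := by
    exact (Finset.sum_subtype (p := fun q : Fin n × Fin n => q.1 < q.2) _ (by simp)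
      (fun q => (v q.1 - v q.2) ^ 2)).symm
  have h2 : ∑ q ∈ Finset.univ.filter (fun q : Fin n × Fin n => q.1 < q.2), (v q.1 - v q.2) ^ 2
      ≤ ∑ q : Fin n × Fin n, (v q.1 - v q.2) ^ 2 :=
    Finset.sum_le_sum_of_subset_of_nonneg (Finset.filter_subset _ _)
      (fun q _ _ => sq_nonneg _)
  have h3 : ∑ q : Fin n × Fin n, (v q.1 - v q.2) ^ 2 ≤ 4 * n := by
    have hb : ∀ q : Fin n × Fin n, (v q.1 - v q.2) ^ 2 ≤ 2 * v q.1 ^ 2 + 2 * v q.2 ^ 2 := by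
      intro q; nlinarith [sq_nonneg (v q.1 + v q.2)]
    calc ∑ q : Fin n × Fin n, (v q.1 - v q.2) ^ 2
        ≤ ∑ q : Fin n × Fin n, (2 * v q.1 ^ 2 + 2 * v q.2 ^ 2) :=
          Finset.sum_le_sum (fun q _ => hb q)
      _ = 4 * n := by
          rw [Fintype.sum_prod_type]
          have hrow : ∀ i : Fin n, ∑ j : Fin n, (2 * v i ^ 2 + 2 * v j ^ 2)
              = (n : ℝ) * (2 * v i ^ 2) + 2 := by
            intro i
            rw [Finset.sum_add_distrib, Finset.sum_const, ← Finset.mul_sum, hv2]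
            simp [nsmul_eq_mul]
          rw [Finset.sum_congr rfl (fun i _ => hrow i), Finset.sum_add_distrib,
            Finset.sum_const]
          have he : ∑ i : Fin n, (n : ℝ) * (2 * v i ^ 2) = 2 * (n : ℝ) := by
            have h' : ∑ i : Fin n, (n : ℝ) * (2 * v i ^ 2)
                = (2 * (n : ℝ)) * ∑ i : Fin n, v i ^ 2 := by
              rw [Finset.mul_sum]
              exact Finset.sum_congr rfl (fun i _ => by ring)
            rw [h', hv2, mul_one]
          rw [he]
          simp [nsmul_eq_mul]
          ring
  linarith

set_option maxHeartbeats 1000000 in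
/-- for `δ, ρ ∈ (0,1)`, any non-almost-constant unit vector `v`, any
`α > 0` and any `γ ∈ (0, δρ/12)`, one has `CLCD_{α,γ}(v) ≥ (1/7)√(δn)`. -/
theorem stmt11 {n : ℕ} (δ ρ : ℝ) (hδ : 0 < δ) (hδ1 : δ < 1) (hρ : 0 < ρ) (hρ1 : ρ < 1)
    (v : Fin n → ℝ) (hv : pnorm v = 1) (hna : ¬ almostConst δ ρ v)
    (α γ : ℝ) (hα : 0 < α) (hγ : 0 < γ) (hγ1 : γ < δ * ρ / 12) :
    ENNReal.ofReal (1 / 7 * Real.sqrt (δ * n)) ≤ CLCD n α γ v := by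
  classical
  -- unit norm in squared form
  have hvnn : (0:ℝ) ≤ ∑ i, v i ^ 2 := Finset.sum_nonneg fun i _ => sq_nonneg _
  have hv2 : ∑ i, v i ^ 2 = 1 := by
    have h := Real.sq_sqrt hvnn
    rw [pnorm] at hv
    rw [hv] at h
    linarith
  have hn : n ≠ 0 := by
    rintro rfl
    simp at hv2
  haveI : NeZero n := ⟨hn⟩
  have hn0 : (0:ℝ) < n := by
    have : 0 < n := Nat.pos_of_ne_zero hn
    exact_mod_cast this
  -- push hna
  simp only [almostConst, not_exists, not_le] at hna
  refine le_sInf ?_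
  rintro θ ⟨t, ht0, rfl, hlt⟩
  rw [ENNReal.ofReal_le_ofReal_iff (le_of_lt ht0)]
  by_contra hcon
  push_neg at hcon
  -- squared bound on t
  have ht2 : t ^ 2 < δ * n / 49 := by
    have h := pow_lt_pow_left₀ hcon (le_of_lt ht0) (two_ne_zero)
    rw [mul_pow, Real.sq_sqrt (by positivity : (0:ℝ) ≤ δ * n)] at h
    nlinarith
  set x : PairIdx n → ℝ := fun p => t * Dvec v p with hxdef
  have hlt1 : latDist x < γ * pnorm x := lt_of_lt_of_le hlt (min_le_left _ _)
  rw [latDist] at hlt1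
  obtain ⟨m, hm⟩ := exists_lt_of_ciInf_lt hlt1
  set mr : PairIdx n → ℝ := fun p => ((m p : ℤ) : ℝ) with hmrdef
  -- basic norms
  have hpx : 0 ≤ pnorm x := pnorm_nonneg' x
  have hpd : 0 ≤ pnorm (fun p => x p - mr p) := pnorm_nonneg' _
  have hQx4 : ∑ p, x p ^ 2 ≤ t ^ 2 * (4 * n) := by
    have h1 : ∑ p, x p ^ 2 = t ^ 2 * ∑ p : PairIdx n, (Dvec v p) ^ 2 := by
      rw [Finset.mul_sum]
      exact Finset.sum_congr rfl (fun p _ => by rw [hxdef]; ring)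
    rw [h1]
    have h2 := sumDsq_le v hv2
    nlinarith [sq_nonneg t]
  have hQxnn : (0:ℝ) ≤ ∑ p, x p ^ 2 := Finset.sum_nonneg fun p _ => sq_nonneg _
  -- squared distance bound
  have hQd : ∑ p, (x p - mr p) ^ 2 < γ ^ 2 * ∑ p, x p ^ 2 := by
    have h := pow_lt_pow_left₀ hm hpd (two_ne_zero)
    rw [sq_pnorm, mul_pow, sq_pnorm] at h
    exact h
  -- bound on the integer vector
  have hγ12 : γ ≤ 1 / 12 := by nlinarith
  have hmsum : ∑ p, mr p ^ 2 < (169 / 144) * ∑ p, x p ^ 2 := by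
    have h1 : pnorm mr ≤ pnorm (fun p => x p - mr p) + pnorm x := pnorm_tri x mr
    have h2 : pnorm mr < (13 / 12) * pnorm x := by nlinarith
    have h3 := pow_lt_pow_left₀ h2 (pnorm_nonneg' mr) (two_ne_zero)
    rw [sq_pnorm, mul_pow, sq_pnorm] at h3
    nlinarith
  -- combinatorics
  have hρn : (0:ℝ) < ρ / Real.sqrt n := by positivity
  set A := Finset.univ.filter (fun q : Fin n × Fin n => ρ / Real.sqrt n < |v q.1 - v q.2|)
    with hAdef
  set B := Finset.univ.filter (fun p : PairIdx n => ρ / Real.sqrt n < |Dvec v p|) with hBdef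
  have hAB : A.card = 2 * B.card := card_gap_pairs v _ hρn
  have hAlow : δ * n * n < (A.card : ℝ) := by
    have hrows := card_gap_rows v (ρ / Real.sqrt n)
    rw [hAdef, hrows]
    push_cast
    have hlt' : ∑ _i : Fin n, δ * (n:ℝ)
        < ∑ i : Fin n, ((Finset.univ.filter
            (fun j : Fin n => ρ / Real.sqrt n < |v i - v j|)).card : ℝ) := by
      apply Finset.sum_lt_sum_of_nonempty Finset.univ_nonempty
      intro i _
      exact row_lower δ ρ v hna i
    have hconst : ∑ _i : Fin n, δ * (n:ℝ) = δ * n * n := by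
      rw [Finset.sum_const]
      simp [nsmul_eq_mul]
      ring
    linarith [hconst ▸ hlt']
  set Z := Finset.univ.filter (fun p : PairIdx n => m p ≠ 0) with hZdef
  have hZcard : (Z.card : ℝ) ≤ ∑ p, mr p ^ 2 := by
    have h1 : (Z.card : ℝ) = ∑ _p ∈ Z, (1:ℝ) := by simp
    rw [h1]
    have h2 : ∑ p ∈ Z, (1:ℝ) ≤ ∑ p ∈ Z, mr p ^ 2 := by
      apply Finset.sum_le_sum
      intro p hp
      have hpne : m p ≠ 0 := (Finset.mem_filter.1 hp).2
      have h2 : (1:ℤ) ≤ (m p) ^ 2 := by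
        nlinarith [sq_abs (m p), Int.one_le_abs hpne, abs_nonneg (m p)]
      have h3 : ((1:ℤ):ℝ) ≤ (((m p) ^ 2 : ℤ) : ℝ) := by exact_mod_cast h2
      have h4 : mr p ^ 2 = (((m p) ^ 2 : ℤ) : ℝ) := by rw [hmrdef]; push_cast; ring
      rw [h4]
      exact_mod_cast h3
    refine le_trans h2 (Finset.sum_le_sum_of_subset_of_nonneg (Finset.subset_univ _)
      (fun p _ _ => sq_nonneg _))
  set G := B \ Z with hGdef
  have hBGZ : (B.card : ℝ) ≤ (G.card : ℝ) + (Z.card : ℝ) := by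
    have h1 : B ⊆ G ∪ Z := by
      intro p hp
      by_cases hpz : p ∈ Z
      · exact Finset.mem_union_right _ hpz
      · exact Finset.mem_union_left _ (Finset.mem_sdiff.2 ⟨hp, hpz⟩)
    have h2 := Finset.card_le_card h1
    have h3 := Finset.card_union_le G Z
    have : B.card ≤ G.card + Z.card := le_trans h2 h3
    exact_mod_cast this
  -- lower bound on the distance from the zero-coordinate big-gap pairs
  have hlow : (G.card : ℝ) * (t ^ 2 * ρ ^ 2 / n) ≤ ∑ p, (x p - mr p) ^ 2 := by
    have hterm : ∀ p ∈ G, t ^ 2 * ρ ^ 2 / n ≤ (x p - mr p) ^ 2 := by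
      intro p hp
      have hps := Finset.mem_sdiff.1 hp
      have hm0 : m p = 0 := by
        by_contra hmp
        exact hps.2 (Finset.mem_filter.2 ⟨Finset.mem_univ _, hmp⟩)
      have hmr0 : mr p = 0 := by rw [hmrdef]; simp [hm0]
      have hgap : ρ / Real.sqrt n < |Dvec v p| := (Finset.mem_filter.1 hps.1).2
      have hsq : ρ ^ 2 / n ≤ (Dvec v p) ^ 2 := by
        have h := pow_le_pow_left₀ (le_of_lt hρn) (le_of_lt hgap) 2
        rw [div_pow, Real.sq_sqrt (le_of_lt hn0), sq_abs] at h
        exact h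
      rw [hmr0, sub_zero, hxdef]
      have : (t * Dvec v p) ^ 2 = t ^ 2 * (Dvec v p) ^ 2 := by ring
      rw [this]
      rw [div_le_iff₀ hn0] at hsq ⊢
      nlinarith [sq_nonneg t]
    have h1 : (G.card : ℝ) * (t ^ 2 * ρ ^ 2 / n) ≤ ∑ p ∈ G, (x p - mr p) ^ 2 := by
      have := Finset.card_nsmul_le_sum G (fun p => (x p - mr p) ^ 2) (t ^ 2 * ρ ^ 2 / n) hterm
      rwa [nsmul_eq_mul] at this
    refine le_trans h1 (Finset.sum_le_sum_of_subset_of_nonneg (Finset.subset_univ _)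
      (fun p _ _ => sq_nonneg _))
  -- numerics
  have hABr : (A.card : ℝ) = 2 * (B.card : ℝ) := by exact_mod_cast hAB
  have hZb : (Z.card : ℝ) < (169 / 1764) * (δ * n * n) := by
    have h4 : t ^ 2 * (4 * (n:ℝ)) < (δ * n / 49) * (4 * n) := by nlinarith
    linarith [hZcard, hmsum, hQx4, h4]
  have hG1 : (713 / 1764) * (δ * n * n) < (G.card : ℝ) := by
    linarith [hAlow, hABr, hBGZ, hZb]
  have hpos : (0:ℝ) < t ^ 2 * ρ ^ 2 / n := by positivity
  have hfin1 : (713 / 1764) * (δ * n * n) * (t ^ 2 * ρ ^ 2 / n) < ∑ p, (x p - mr p) ^ 2 :=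
    lt_of_lt_of_le (mul_lt_mul_of_pos_right hG1 hpos) hlow
  have hγ2 : γ ^ 2 < (δ * ρ / 12) ^ 2 := pow_lt_pow_left₀ hγ1 (le_of_lt hγ) (two_ne_zero)
  have hQγ : ∑ p, (x p - mr p) ^ 2 < (δ * ρ / 12) ^ 2 * (t ^ 2 * (4 * n)) := by
    have e1 : γ ^ 2 * ∑ p, x p ^ 2 ≤ γ ^ 2 * (t ^ 2 * (4 * n)) :=
      mul_le_mul_of_nonneg_left hQx4 (sq_nonneg γ)
    have e2 : γ ^ 2 * (t ^ 2 * (4 * n)) < (δ * ρ / 12) ^ 2 * (t ^ 2 * (4 * n)) :=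
      mul_lt_mul_of_pos_right hγ2 (by positivity)
    linarith [hQd]
  have hkey : (713 / 1764) * (δ * n * n) * (t ^ 2 * ρ ^ 2 / n)
      = (713 / 1764) * (δ * n) * (t ^ 2 * ρ ^ 2) := by
    field_simp
  rw [hkey] at hfin1
  have hδ2 : δ ^ 2 ≤ δ := by nlinarith
  have e3 : (δ * ρ / 12) ^ 2 * (t ^ 2 * (4 * n)) ≤ δ * (ρ ^ 2 * t ^ 2 * n / 36) := by
    have h5 := mul_le_mul_of_nonneg_right hδ2
      (by positivity : (0:ℝ) ≤ ρ ^ 2 * t ^ 2 * n / 36)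
    have h6 : (δ * ρ / 12) ^ 2 * (t ^ 2 * (4 * n)) = δ ^ 2 * (ρ ^ 2 * t ^ 2 * n / 36) := by
      ring
    rw [h6]
    exact h5
  have hXpos : (0:ℝ) < δ * n * t ^ 2 * ρ ^ 2 := by positivity
  linarith [hfin1, hQγ, e3, hXpos]

end
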